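/- (ℓ_{2,log}-shrinkage operator.) Let Y be a real d×n matrix with columns y_1, …, y_n and let α > 0. For each j, set s_j := ‖y_j‖_2, f_j(x) := (1/2)(x − s_j)^2 + α·log(1+x), and, when (1+s_j)^2 > 4α, ξ_j := (s_j − 1)/2 + sqrt((1+s_j)^2/4 − α). Define the matrix W* whose j-th column is w*_j := (ξ_j/‖y_j‖_2)·y_j if f_j(ξ_j) ≤ f_j(0), (1+s_j)^2 > 4α, and ξ_j > 0; and w*_j := 0 otherwise. Then W* is a global minimizer over all real d×n matrices W of the objective (1/2)‖Y − W‖_F^2 + α‖W‖_{2,log}, where ‖·‖_F is the Frobenius norm. -/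

import Mathlib

private noncomputable def Fsh (s α t : ℝ) : ℝ := (1 / 2) * (t - s) ^ 2 + α * Real.log (1 + t)

private lemma Fsh_hasDeriv (s α : ℝ) {t : ℝ} (ht : (0:ℝ) < 1 + t) :
    HasDerivAt (Fsh s α) ((t - s) + α * (1/(1+t))) t := by
  have h1 : HasDerivAt (fun x : ℝ => (1/2)*(x-s)^2) (t - s) t := by
    have h := (((hasDerivAt_id t).sub_const s).pow 2).const_mul (1/2 : ℝ)
    exact h.congr_deriv (by simp [id])
  have h2 : HasDerivAt (fun x : ℝ => Real.log (1+x)) (1/(1+t)) t := by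
    have h := ((hasDerivAt_id t).const_add 1).log ht.ne'
    simpa using h
  have := h1.add (h2.const_mul α)
  exact this

private lemma Fsh_mono (s α a b : ℝ) (ha : 0 ≤ a)
    (hg : ∀ t ∈ Set.Ioo a b, 0 ≤ t^2 + (1-s)*t + (α - s)) :
    MonotoneOn (Fsh s α) (Set.Icc a b) := by
  have hdiff : ∀ t ∈ Set.Icc a b, DifferentiableAt ℝ (Fsh s α) t := by
    intro t ht
    exact (Fsh_hasDeriv s α (by have := ht.1; linarith)).differentiableAt
  apply monotoneOn_of_deriv_nonneg (convex_Icc a b)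
  · exact fun t ht => (hdiff t ht).continuousAt.continuousWithinAt
  · rw [interior_Icc]
    exact fun t ht => (hdiff t ⟨ht.1.le, ht.2.le⟩).differentiableWithinAt
  · rw [interior_Icc]
    intro t ht
    have h1t : (0:ℝ) < 1 + t := by have := ht.1; linarith
    rw [(Fsh_hasDeriv s α h1t).deriv]
    have hnum := hg t ht
    have heq : (t - s) + α * (1/(1+t)) = (t^2 + (1-s)*t + (α - s))/(1+t) := by
      field_simp; ring
    rw [heq]
    exact div_nonneg hnum h1t.le

private lemma Fsh_anti (s α a b : ℝ) (ha : 0 ≤ a)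
    (hg : ∀ t ∈ Set.Ioo a b, t^2 + (1-s)*t + (α - s) ≤ 0) :
    AntitoneOn (Fsh s α) (Set.Icc a b) := by
  have hdiff : ∀ t ∈ Set.Icc a b, DifferentiableAt ℝ (Fsh s α) t := by
    intro t ht
    exact (Fsh_hasDeriv s α (by have := ht.1; linarith)).differentiableAt
  apply antitoneOn_of_deriv_nonpos (convex_Icc a b)
  · exact fun t ht => (hdiff t ht).continuousAt.continuousWithinAt
  · rw [interior_Icc]
    exact fun t ht => (hdiff t ⟨ht.1.le, ht.2.le⟩).differentiableWithinAt
  · rw [interior_Icc]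
    intro t ht
    have h1t : (0:ℝ) < 1 + t := by have := ht.1; linarith
    rw [(Fsh_hasDeriv s α h1t).deriv]
    have hnum := hg t ht
    have heq : (t - s) + α * (1/(1+t)) = (t^2 + (1-s)*t + (α - s))/(1+t) := by
      field_simp; ring
    rw [heq]
    exact div_nonpos_of_nonpos_of_nonneg hnum h1t.le

private lemma key1d (s α : ℝ) (hs : 0 ≤ s) (hα : 0 < α)
    (ξ : ℝ) (hξ : ξ = (s-1)/2 + Real.sqrt ((1+s)^2/4 - α))
    (x : ℝ) (hx : 0 ≤ x) :
    (if Fsh s α ξ ≤ Fsh s α 0 ∧ (1+s)^2 > 4*α ∧ 0 < ξ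
      then Fsh s α ξ else Fsh s α 0) ≤ Fsh s α x := by
  set r := Real.sqrt ((1+s)^2/4 - α) with hr
  have hr0 : 0 ≤ r := Real.sqrt_nonneg _
  by_cases hD : (1+s)^2 > 4*α
  · have hr2 : r^2 = (1+s)^2/4 - α := Real.sq_sqrt (by linarith)
    have hfac : ∀ t : ℝ, t^2 + (1-s)*t + (α - s) = (t - ((s-1)/2 - r)) * (t - ξ) := by
      intro t; rw [hξ]; linear_combination hr2
    by_cases hxi : 0 < ξ
    · have hmin : min (Fsh s α 0) (Fsh s α ξ) ≤ Fsh s α x := by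
        rcases le_or_gt ξ x with h | h
        · have hm := Fsh_mono s α ξ x hxi.le (by
            intro t ht; rw [hfac]
            have h1 := ht.1
            have hr1 : (s-1)/2 - r = ξ - 2*r := by rw [hξ]; ring
            nlinarith)
          exact le_trans (min_le_right _ _)
            (hm ⟨le_refl ξ, h⟩ ⟨h, le_refl x⟩ h)
        · rcases le_or_gt x ((s-1)/2 - r) with h2 | h2
          · have hm := Fsh_mono s α 0 ((s-1)/2 - r) le_rfl (by
              intro t ht; rw [hfac]
              have hr1 : (s-1)/2 - r ≤ ξ := by rw [hξ]; linarith
              have := ht.2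
              nlinarith)
            refine le_trans (min_le_left _ _) ?_
            exact hm ⟨le_rfl, by linarith⟩ ⟨hx, h2⟩ hx
          · have hm := Fsh_anti s α x ξ hx (by
              intro t ht; rw [hfac]
              have h1 := ht.1; have h2' := ht.2
              nlinarith)
            refine le_trans (min_le_right _ _) ?_
            exact hm ⟨le_rfl, h.le⟩ ⟨h.le, le_rfl⟩ h.le
      by_cases hle : Fsh s α ξ ≤ Fsh s α 0
      · rw [if_pos ⟨hle, hD, hxi⟩]
        calc Fsh s α ξ = min (Fsh s α 0) (Fsh s α ξ) := (min_eq_right hle).symm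
          _ ≤ Fsh s α x := hmin
      · rw [if_neg (fun h => hle h.1)]
        push_neg at hle
        calc Fsh s α 0 = min (Fsh s α 0) (Fsh s α ξ) := (min_eq_left hle.le).symm
          _ ≤ Fsh s α x := hmin
    · rw [if_neg (fun h => hxi h.2.2)]
      push_neg at hxi
      have hm := Fsh_mono s α 0 x le_rfl (by
        intro t ht; rw [hfac]
        have h1 := ht.1
        have hr1 : (s-1)/2 - r ≤ ξ := by rw [hξ]; linarith
        nlinarith)
      exact hm ⟨le_rfl, hx⟩ ⟨hx, le_rfl⟩ hx
  · rw [if_neg (fun h => hD h.2.1)]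
    push_neg at hD
    have hm := Fsh_mono s α 0 x le_rfl (by
      intro t ht
      nlinarith [sq_nonneg (t - (s-1)/2)])
    exact hm ⟨le_rfl, hx⟩ ⟨hx, le_rfl⟩ hx


open scoped Classical

/-- The `ℓ_{2,log}` (pseudo) norm of a real `d × n` matrix:
`‖A‖_{2,log} = ∑ⱼ log (1 + ‖aⱼ‖₂)`, where `aⱼ` is the `j`-th column. -/
noncomputable def l2logNorm {d n : ℕ} (A : Matrix (Fin d) (Fin n) ℝ) : ℝ :=
  ∑ j, Real.log (1 + Real.sqrt (∑ i, A i j ^ 2))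

/-- `ℓ_{2,log}`-shrinkage operator: the matrix `W*` built column-wise by the log-shrinkage
rule globally minimizes `W ↦ (1/2)‖Y - W‖_F² + α ‖W‖_{2,log}`. -/
theorem l2log_shrinkage_operator {d n : ℕ} (Y : Matrix (Fin d) (Fin n) ℝ)
    (α : ℝ) (hα : 0 < α)
    (s : Fin n → ℝ) (hs : ∀ j, s j = Real.sqrt (∑ i, Y i j ^ 2))
    (f : Fin n → ℝ → ℝ)
    (hf : ∀ j x, f j x = (1 / 2) * (x - s j) ^ 2 + α * Real.log (1 + x))
    (ξ : Fin n → ℝ)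
    (hξ : ∀ j, ξ j = (s j - 1) / 2 + Real.sqrt ((1 + s j) ^ 2 / 4 - α))
    (Wstar : Matrix (Fin d) (Fin n) ℝ)
    (hWstar : ∀ i j, Wstar i j =
      if f j (ξ j) ≤ f j 0 ∧ (1 + s j) ^ 2 > 4 * α ∧ 0 < ξ j
      then (ξ j / s j) * Y i j else 0) :
    ∀ W : Matrix (Fin d) (Fin n) ℝ,
      (1 / 2) * (∑ i, ∑ j, (Y i j - Wstar i j) ^ 2) + α * l2logNorm Wstar ≤
        (1 / 2) * (∑ i, ∑ j, (Y i j - W i j) ^ 2) + α * l2logNorm W := by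
  intro W
  have hfF : ∀ j, f j = Fsh (s j) α := by
    intro j; funext t; rw [hf]; rfl
  have col : ∀ M : Matrix (Fin d) (Fin n) ℝ,
      (1 / 2) * (∑ i, ∑ j, (Y i j - M i j) ^ 2) + α * l2logNorm M
        = ∑ j, ((1 / 2) * (∑ i, (Y i j - M i j) ^ 2)
            + α * Real.log (1 + Real.sqrt (∑ i, M i j ^ 2))) := by
    intro M
    rw [l2logNorm, Finset.sum_comm, Finset.mul_sum, Finset.mul_sum,
      ← Finset.sum_add_distrib]
  rw [col Wstar, col W]
  apply Finset.sum_le_sum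
  intro j _
  -- basic facts about s j
  have hsum0 : (0:ℝ) ≤ ∑ i, Y i j ^ 2 := Finset.sum_nonneg fun i _ => sq_nonneg _
  have hs0 : 0 ≤ s j := by rw [hs]; exact Real.sqrt_nonneg _
  have hssq : s j ^ 2 = ∑ i, Y i j ^ 2 := by rw [hs]; exact Real.sq_sqrt hsum0
  set x := Real.sqrt (∑ i, W i j ^ 2) with hxdef
  have hwsum0 : (0:ℝ) ≤ ∑ i, W i j ^ 2 := Finset.sum_nonneg fun i _ => sq_nonneg _
  have hx0 : 0 ≤ x := Real.sqrt_nonneg _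
  have hxsq : x ^ 2 = ∑ i, W i j ^ 2 := Real.sq_sqrt hwsum0
  -- Cauchy-Schwarz lower bound on the W-column cost
  have cauchy : (∑ i, Y i j * W i j) ≤ s j * x := by
    have h2 := Finset.sum_mul_sq_le_sq_mul_sq Finset.univ (fun i => Y i j) (fun i => W i j)
    have h3 : (∑ i, Y i j * W i j) ^ 2 ≤ (s j * x) ^ 2 := by
      rw [mul_pow, hssq, hxsq]; exact h2
    nlinarith [mul_nonneg hs0 hx0]
  have hRHS : Fsh (s j) α x ≤ (1 / 2) * (∑ i, (Y i j - W i j) ^ 2)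
      + α * Real.log (1 + x) := by
    have hexp : ∑ i, (Y i j - W i j) ^ 2
        = (∑ i, Y i j ^ 2) - 2 * (∑ i, Y i j * W i j) + ∑ i, W i j ^ 2 := by
      have h := Finset.sum_congr rfl fun i (_ : i ∈ Finset.univ) =>
        show (Y i j - W i j) ^ 2 = Y i j ^ 2 - 2 * (Y i j * W i j) + W i j ^ 2 by ring
      rw [h, Finset.sum_add_distrib, Finset.sum_sub_distrib, ← Finset.mul_sum]
    rw [Fsh, hexp, ← hssq, ← hxsq]
    nlinarith [cauchy]
  -- the Wstar column cost equals the if-value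
  have hL : (1 / 2) * (∑ i, (Y i j - Wstar i j) ^ 2)
      + α * Real.log (1 + Real.sqrt (∑ i, Wstar i j ^ 2))
      = if Fsh (s j) α (ξ j) ≤ Fsh (s j) α 0 ∧ (1 + s j) ^ 2 > 4 * α ∧ 0 < ξ j
        then Fsh (s j) α (ξ j) else Fsh (s j) α 0 := by
    by_cases hcnd : f j (ξ j) ≤ f j 0 ∧ (1 + s j) ^ 2 > 4 * α ∧ 0 < ξ j
    · have hcnd' : Fsh (s j) α (ξ j) ≤ Fsh (s j) α 0 ∧ (1 + s j) ^ 2 > 4 * α ∧ 0 < ξ j := by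
        rw [← hfF]; exact hcnd
      rw [if_pos hcnd']
      have hWc : ∀ i, Wstar i j = (ξ j / s j) * Y i j := fun i => by
        rw [hWstar, if_pos hcnd]
      have hspos : 0 < s j := by
        rcases lt_or_eq_of_le hs0 with h | h
        · exact h
        · exfalso
          have hξj := hξ j
          rw [← h] at hξj
          have h14 : Real.sqrt ((1 + (0:ℝ)) ^ 2 / 4 - α) ≤ 1 / 2 := by
            calc Real.sqrt ((1 + (0:ℝ)) ^ 2 / 4 - α) ≤ Real.sqrt (1 / 4) :=
              Real.sqrt_le_sqrt (by norm_num; linarith)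
            _ = 1 / 2 := by
              rw [show (1/4:ℝ) = (1/2)^2 by norm_num, Real.sqrt_sq (by norm_num)]
          have := hcnd.2.2
          rw [hξj] at this
          linarith
      have hsumW : ∑ i, Wstar i j ^ 2 = (ξ j) ^ 2 := by
        calc ∑ i, Wstar i j ^ 2 = (ξ j / s j) ^ 2 * ∑ i, Y i j ^ 2 := by
              rw [Finset.mul_sum]
              exact Finset.sum_congr rfl fun i _ => by rw [hWc]; ring
          _ = (ξ j / s j) ^ 2 * s j ^ 2 := by rw [hssq]
          _ = (ξ j) ^ 2 := by field_simp
      have hres : ∑ i, (Y i j - Wstar i j) ^ 2 = (ξ j - s j) ^ 2 := by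
        calc ∑ i, (Y i j - Wstar i j) ^ 2 = (1 - ξ j / s j) ^ 2 * ∑ i, Y i j ^ 2 := by
              rw [Finset.mul_sum]
              exact Finset.sum_congr rfl fun i _ => by rw [hWc]; ring
          _ = (1 - ξ j / s j) ^ 2 * s j ^ 2 := by rw [hssq]
          _ = (ξ j - s j) ^ 2 := by field_simp; ring
      rw [hres, hsumW, Real.sqrt_sq hcnd.2.2.le, Fsh]
    · have hcnd' : ¬(Fsh (s j) α (ξ j) ≤ Fsh (s j) α 0 ∧ (1 + s j) ^ 2 > 4 * α ∧ 0 < ξ j) := by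
        rw [← hfF]; exact hcnd
      rw [if_neg hcnd']
      have hWc : ∀ i, Wstar i j = 0 := fun i => by rw [hWstar, if_neg hcnd]
      have h1 : ∑ i, (Y i j - Wstar i j) ^ 2 = ∑ i, Y i j ^ 2 :=
        Finset.sum_congr rfl fun i _ => by rw [hWc]; ring
      have h2 : ∑ i, Wstar i j ^ 2 = 0 :=
        Finset.sum_eq_zero fun i _ => by rw [hWc]; ring
      rw [h1, h2, Real.sqrt_zero, ← hssq, Fsh]
      ring_nf
  rw [hL]
  exact le_trans (key1d (s j) α hs0 hα (ξ j) (hξ j) x hx0) hRHS
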